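/- Brunn's theorem for multiple relations: for every set I, setting E_i = ({0,1}^(P(I))) for all i ∈ I, every integral connectivity structure 𝒦 on I equals the connectivity structure K_R of some multiple relation R with domain I in this family; specifically, one may take R to be the relation whose graph consists of the families (f_i)_{i∈I} (each f_i : P(I) → {0,1}) such that for every nonempty K ∈ 𝒦 there exists i ∈ K with f_i(K) = 1. -/

import Mathlib

open Classical

variable {I : Type*}

/-- A `J`-family: a choice of an element of `E j` for each `j ∈ J`. -/
abbrev Fam (E : I → Type*) (J : Set I) : Type _ := ∀ j : J, E j

/-- Restriction of a `J`-family to a subset `K ⊆ J`. -/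
def restrictFam {E : I → Type*} {J K : Set I} (h : K ⊆ J) (x : Fam E J) : Fam E K :=
  fun k => x ⟨k.1, h k.2⟩

/-- Transport of a family along an equality of index sets. -/
def castFam {E : I → Type*} {J K : Set I} (h : J = K) (x : Fam E J) : Fam E K :=
  h ▸ x

/-- Two families are compatible if they agree on the intersection of their domains. -/
def Compatible {E : I → Type*} {J K : Set I} (x : Fam E J) (y : Fam E K) : Prop :=
  ∀ (i : I) (hJ : i ∈ J) (hK : i ∈ K), x ⟨i, hJ⟩ = y ⟨i, hK⟩

/-- The sum (merge) of two families: the `J ∪ K`-family restricting to `x` on `J`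
(and, when `x` and `y` are compatible, to `y` on `K`). -/
noncomputable def merge {E : I → Type*} {J K : Set I} (x : Fam E J) (y : Fam E K) :
    Fam E (J ∪ K) :=
  fun i => if h : i.1 ∈ J then x ⟨i.1, h⟩ else y ⟨i.1, i.2.resolve_left h⟩

/-- A multiple relation: a domain `dom ⊆ I` together with a graph of `dom`-families. -/
structure MRel (E : I → Type*) where
  dom : Set I
  graph : Set (Fam E dom)

/-- The join of two multiple relations. -/
def MRel.join {E : I → Type*} (R S : MRel E) : MRel E where
  dom := R.dom ∪ S.dom
  graph := {x | restrictFam Set.subset_union_left x ∈ R.graph ∧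
    restrictFam Set.subset_union_right x ∈ S.graph}

/-- The restriction of a multiple relation to a subset `K` of its domain. -/
def MRel.restr {E : I → Type*} (R : MRel E) (K : Set I) (h : K ⊆ R.dom) : MRel E :=
  ⟨K, restrictFam h '' R.graph⟩

/-- The full (trivial) relation on `J`. -/
def MRel.full (E : I → Type*) (J : Set I) : MRel E := ⟨J, Set.univ⟩

/-- Inclusion of multiple relations: equal domains and inclusion of graphs. -/
def MRel.le {E : I → Type*} (R S : MRel E) : Prop :=
  ∃ h : R.dom = S.dom, ∀ x ∈ R.graph, castFam h x ∈ S.graph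

/-- `A` is splittable for `R`: `A ⊆ J_R` and the restriction `R|A` splits along
some bipartition `(K, L)` of `A`. -/
def SplittableFor {E : I → Type*} (R : MRel E) (A : Set I) : Prop :=
  ∃ (K L : Set I) (hK : K ⊆ R.dom) (hL : L ⊆ R.dom) (hA : A ⊆ R.dom),
    K.Nonempty ∧ L.Nonempty ∧ Disjoint K L ∧ K ∪ L = A ∧
      R.restr A hA = (R.restr K hK).join (R.restr L hL)

/-- The connectivity structure of `R`: the subsets of `J_R` that are not splittable. -/
def connStruct {E : I → Type*} (R : MRel E) : Set (Set I) :=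
  {A | A ⊆ R.dom ∧ ¬ SplittableFor R A}


/-- Brunn's relation associated with a connectivity structure `𝒦` on `I`:
here `E i = ({0,1}ᴾ⁽ᴵ⁾)` for every `i`, and a family `(f_i)_{i ∈ I}` is compatible
iff for every nonempty `K ∈ 𝒦` there is `i ∈ K` with `f_i K = 1`. -/
def brunnRel (𝒦 : Set (Set I)) : MRel (fun _ : I => Set I → Bool) :=
  ⟨Set.univ, {f | ∀ K ∈ 𝒦, K.Nonempty →
    ∃ (i : I) (hi : i ∈ K), f ⟨i, Set.mem_univ i⟩ K = true}⟩

lemma castFam_apply {E : I → Type*} {J K : Set I} (h : J = K) (x : Fam E J) (k : K) :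
    castFam h x k = x ⟨k.1, h.symm ▸ k.2⟩ := by subst h; rfl

lemma mrel_ext {E : I → Type*} {R S : MRel E} (h : R.dom = S.dom)
    (h2 : ∀ x : Fam E R.dom, x ∈ R.graph ↔ castFam h x ∈ S.graph) : R = S := by
  obtain ⟨d1, g1⟩ := R; obtain ⟨d2, g2⟩ := S
  dsimp at h; subst h
  simp only [MRel.mk.injEq, heq_eq_eq, true_and]
  ext x
  simpa [castFam] using h2 x

lemma graph_transfer {E : I → Type*} {R S : MRel E} (h : R = S)
    (hd : R.dom = S.dom) {x : Fam E S.dom}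
    (hx : x ∈ S.graph) : castFam hd.symm x ∈ R.graph := by
  subst h; simpa [castFam] using hx

theorem stmt19 {I : Type*} (𝒦 : Set (Set I))
    (hempty : ∅ ∈ 𝒦)
    (hsing : ∀ i : I, {i} ∈ 𝒦)
    (hconn : ∀ C ⊆ 𝒦, (⋂₀ C).Nonempty → ⋃₀ C ∈ 𝒦) :
    connStruct (brunnRel 𝒦) = 𝒦 := by
  classical
  ext A
  constructor
  · -- A not splittable → A ∈ 𝒦
    rintro ⟨-, hns⟩
    by_contra hA
    apply hns
    -- A is nonempty since ∅ ∈ 𝒦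
    have hAne : A.Nonempty := by
      rcases Set.eq_empty_or_nonempty A with rfl | h
      · exact absurd hempty hA
      · exact h
    obtain ⟨a, ha⟩ := hAne
    -- the component of a in A
    set Ca : Set I := ⋃₀ {C | C ∈ 𝒦 ∧ a ∈ C ∧ C ⊆ A} with hCadef
    have hCaK : Ca ∈ 𝒦 := hconn _ (fun C hC => hC.1) ⟨a, fun C hC => hC.2.1⟩
    have haCa : a ∈ Ca := ⟨{a}, ⟨hsing a, rfl, Set.singleton_subset_iff.mpr ha⟩, rfl⟩
    have hCaA : Ca ⊆ A := Set.sUnion_subset fun C hC => hC.2.2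
    have key : ∀ C ∈ 𝒦, C ⊆ A → (C ∩ Ca).Nonempty → C ⊆ Ca := by
      intro C hC hCA hmeet
      have hu : C ∪ Ca ∈ 𝒦 := by
        have := hconn {C, Ca} (by rintro X (rfl | rfl) <;> assumption)
          (by rwa [Set.sInter_pair])
        rwa [Set.sUnion_pair] at this
      have : C ∪ Ca ⊆ Ca :=
        Set.subset_sUnion_of_mem ⟨hu, Or.inr haCa, Set.union_subset hCA hCaA⟩
      exact (Set.subset_union_left).trans this
    have hLne : (A \ Ca).Nonempty := by
      rcases Set.eq_empty_or_nonempty (A \ Ca) with he | h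
      · exfalso
        apply hA
        have : A ⊆ Ca := by
          intro i hi
          by_contra hic
          exact Set.eq_empty_iff_forall_notMem.mp he i ⟨hi, hic⟩
        rwa [Set.Subset.antisymm hCaA this] at hCaK
      · exact h
    have hd : A = Ca ∪ (A \ Ca) := (Set.union_diff_cancel hCaA).symm
    refine ⟨Ca, A \ Ca, Set.subset_univ _, Set.subset_univ _, Set.subset_univ _,
      ⟨a, haCa⟩, hLne, Set.disjoint_sdiff_right, hd.symm, ?_⟩
    apply mrel_ext hd
    intro x
    constructor
    · rintro ⟨u, hu, rfl⟩
      constructor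
      · refine ⟨u, hu, ?_⟩
        funext k
        unfold restrictFam; erw [castFam_apply]
      · refine ⟨u, hu, ?_⟩
        funext k
        unfold restrictFam; erw [castFam_apply]
    · rintro ⟨⟨f, hf, hfeq⟩, ⟨g, hg, hgeq⟩⟩
      -- build a global family
      set h' : Fam (fun _ : I => Set I → Bool) Set.univ :=
        fun i => if i.1 ∈ Ca then f i else if i.1 ∈ A then g i else fun _ => true
        with hh'def
      have hh' : h' ∈ (brunnRel 𝒦).graph := by
        intro C hC hCne
        by_cases hCA : C ⊆ A
        · by_cases hmeet : (C ∩ Ca).Nonempty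
          · have hCsub := key C hC hCA hmeet
            obtain ⟨i, hiC, hival⟩ := hf C hC hCne
            refine ⟨i, hiC, ?_⟩
            simp only [hh'def, if_pos (hCsub hiC)]
            exact hival
          · obtain ⟨i, hiC, hival⟩ := hg C hC hCne
            have hiCa : i ∉ Ca := fun hin => hmeet ⟨i, hiC, hin⟩
            refine ⟨i, hiC, ?_⟩
            simp only [hh'def, if_neg hiCa, if_pos (hCA hiC)]
            exact hival
        · obtain ⟨i, hiC, hiA⟩ := Set.not_subset.mp hCA
          have hiCa : i ∉ Ca := fun hin => hiA (hCaA hin)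
          refine ⟨i, hiC, ?_⟩
          simp only [hh'def, if_neg hiCa, if_neg hiA]
      refine ⟨h', hh', ?_⟩
      funext k
      obtain ⟨i, hi⟩ := k
      by_cases hiCa : i ∈ Ca
      · have h1 := congrFun hfeq ⟨i, hiCa⟩
        unfold restrictFam at h1; erw [castFam_apply] at h1
        unfold restrictFam
        simp only [hh'def, if_pos hiCa]
        exact h1
      · have hiL : i ∈ A \ Ca := ⟨hi, hiCa⟩
        have h1 := congrFun hgeq ⟨i, hiL⟩
        unfold restrictFam at h1; erw [castFam_apply] at h1
        unfold restrictFam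
        simp only [hh'def, if_neg hiCa, if_pos hi]
        exact h1
  · -- A ∈ 𝒦 → A not splittable
    intro hA
    refine ⟨Set.subset_univ A, ?_⟩
    rintro ⟨K, L, hK, hL, hAsub, hKne, hLne, hdisj, hKL, heq⟩
    have hAne : A.Nonempty := hKL ▸ hKne.mono Set.subset_union_left
    -- a global family which is 1 on S ≠ A at members of S, and on A only at members of L
    set f : Fam (fun _ : I => Set I → Bool) Set.univ :=
      fun i S => if S = A then (if i.1 ∈ L then true else false)
        else (if i.1 ∈ S then true else false) with hfdef
    set g : Fam (fun _ : I => Set I → Bool) Set.univ :=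
      fun i S => if S = A then (if i.1 ∈ K then true else false)
        else (if i.1 ∈ S then true else false) with hgdef
    have hf : f ∈ (brunnRel 𝒦).graph := by
      intro C hC hCne
      by_cases hCA : C = A
      · subst hCA
        obtain ⟨i, hiL⟩ := hLne
        exact ⟨i, (hKL ▸ Set.subset_union_right) hiL, by simp [hfdef, hiL]⟩
      · obtain ⟨i, hiC⟩ := hCne
        exact ⟨i, hiC, by simp [hfdef, hCA, hiC]⟩
    have hg : g ∈ (brunnRel 𝒦).graph := by
      intro C hC hCne
      by_cases hCA : C = A
      · subst hCA
        obtain ⟨i, hiK⟩ := hKne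
        exact ⟨i, (hKL ▸ Set.subset_union_left) hiK, by simp [hgdef, hiK]⟩
      · obtain ⟨i, hiC⟩ := hCne
        exact ⟨i, hiC, by simp [hgdef, hCA, hiC]⟩
    -- the cheating family on K ∪ L
    set y : Fam (fun _ : I => Set I → Bool) (K ∪ L) :=
      fun i S => if S = A then false else (if i.1 ∈ S then true else false) with hydef
    have hyjoin : y ∈ (((brunnRel 𝒦).restr K hK).join ((brunnRel 𝒦).restr L hL)).graph := by
      constructor
      · refine ⟨f, hf, ?_⟩
        funext k S
        have hkL : k.1 ∉ L := Set.disjoint_left.mp hdisj k.2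
        by_cases hSA : S = A <;> simp [restrictFam, hfdef, hydef, hSA, hkL]
      · refine ⟨g, hg, ?_⟩
        funext k S
        have hkK : k.1 ∉ K := Set.disjoint_right.mp hdisj k.2
        by_cases hSA : S = A <;> simp [restrictFam, hgdef, hydef, hSA, hkK]
    have hdm : ((brunnRel 𝒦).restr A hAsub).dom =
        (((brunnRel 𝒦).restr K hK).join ((brunnRel 𝒦).restr L hL)).dom := hKL.symm
    have hmem := graph_transfer heq hdm hyjoin
    obtain ⟨h, hh, hrest⟩ := hmem
    obtain ⟨i, hiA, hval⟩ := hh A hA hAne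
    have h1 := congrFun (congrFun hrest ⟨i, hiA⟩) A
    unfold restrictFam at h1; erw [castFam_apply] at h1
    simp only [hydef, if_pos rfl] at h1
    exact absurd (hval.symm.trans h1) (by decide)
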